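/- The L¹ norm of the kernel p₁, defined by p₁(t) = t - √2/8 for t ∈ [0,1/2] and p₁(t) = t - 1 + √2/8 for t ∈ (1/2,1], equals ∫₀¹ |p₁(t)| dt = 5/16 - √2/8, and its sup norm is sup_{t∈[0,1]} |p₁(t)| = 1/2 - √2/8. -/

import Mathlib

open MeasureTheory Real Set

theorem stmt_10 (p₁ : ℝ → ℝ)
    (h1 : ∀ t ∈ Icc (0:ℝ) (1/2), p₁ t = t - Real.sqrt 2 / 8)
    (h2 : ∀ t ∈ Ioc (1/2 : ℝ) 1, p₁ t = t - 1 + Real.sqrt 2 / 8) :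
    (∫ t in (0:ℝ)..1, |p₁ t|) = 5/16 - Real.sqrt 2 / 8 ∧
    sSup ((fun t => |p₁ t|) '' Icc (0:ℝ) 1) = 1/2 - Real.sqrt 2 / 8 := by
  have hs2 : Real.sqrt 2 ^ 2 = 2 := Real.sq_sqrt (by norm_num)
  have hs0 : (0:ℝ) ≤ Real.sqrt 2 := Real.sqrt_nonneg 2
  have hsl : Real.sqrt 2 < 1.5 := by nlinarith
  have hsg : 1 < Real.sqrt 2 := by nlinarith
  set c : ℝ := Real.sqrt 2 / 8 with hc
  have hc0 : 0 < c := by positivity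
  have hc4 : c < 1/4 := by rw [hc]; nlinarith
  -- pointwise descriptions of |p₁|
  have key : ∀ a b k : ℝ, ∫ t in a..b, (t - k) = (b^2 - a^2)/2 - k*(b-a) := by
    intro a b k
    rw [intervalIntegral.integral_sub intervalIntegral.intervalIntegrable_id intervalIntegrable_const,
      integral_id, intervalIntegral.integral_const]
    simp [smul_eq_mul]
    ring
  constructor
  · -- integral part
    have e1 : ∫ t in (0:ℝ)..(1/2), |p₁ t| = ∫ t in (0:ℝ)..(1/2), |t - c| := by
      apply intervalIntegral.integral_congr
      intro t ht
      rw [Set.uIcc_of_le (by norm_num : (0:ℝ) ≤ 1/2)] at ht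
      show |p₁ t| = |t - c|
      rw [h1 t ht]
    have e2 : ∫ t in (1/2:ℝ)..1, |p₁ t| = ∫ t in (1/2:ℝ)..1, |t - 1 + c| := by
      apply intervalIntegral.integral_congr_ae
      apply Filter.Eventually.of_forall
      intro t ht
      rw [Set.uIoc_of_le (by norm_num : (1/2:ℝ) ≤ 1)] at ht
      show |p₁ t| = |t - 1 + c|
      rw [h2 t ht]
    have i1 : IntervalIntegrable (fun t => |p₁ t|) volume 0 (1/2) := by
      apply IntervalIntegrable.congr_ae
        (f := fun t => |t - c|)
        ((continuous_id.sub continuous_const).abs.intervalIntegrable 0 (1/2))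
      rw [Filter.eventuallyEq_iff_exists_mem]
      refine ⟨Set.uIoc (0:ℝ) (1/2), self_mem_ae_restrict measurableSet_uIoc, fun t ht => ?_⟩
      rw [Set.uIoc_of_le (by norm_num : (0:ℝ) ≤ 1/2)] at ht
      show |t - c| = |p₁ t|
      rw [h1 t ⟨ht.1.le, ht.2⟩]
    have i2 : IntervalIntegrable (fun t => |p₁ t|) volume (1/2) 1 := by
      apply IntervalIntegrable.congr_ae
        (f := fun t => |t - 1 + c|)
        (((continuous_id.sub continuous_const).add continuous_const).abs.intervalIntegrable (1/2) 1)
      rw [Filter.eventuallyEq_iff_exists_mem]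
      refine ⟨Set.uIoc (1/2:ℝ) 1, self_mem_ae_restrict measurableSet_uIoc, fun t ht => ?_⟩
      rw [Set.uIoc_of_le (by norm_num : (1/2:ℝ) ≤ 1)] at ht
      show |t - 1 + c| = |p₁ t|
      rw [h2 t ht]
    have hcsq : c^2 = 1/32 := by rw [hc]; rw [div_pow, hs2]; norm_num
    have hc12 : c < 1/2 := by linarith
    have I1 : ∫ t in (0:ℝ)..c, |t - c| = c^2/2 := by
      have e : ∫ t in (0:ℝ)..c, |t - c| = ∫ t in (0:ℝ)..c, -(t - c) := by
        apply intervalIntegral.integral_congr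
        intro t ht
        rw [Set.uIcc_of_le hc0.le] at ht
        exact abs_of_nonpos (by linarith [ht.2])
      rw [e, intervalIntegral.integral_neg, key]; ring
    have I2 : ∫ t in c..(1/2:ℝ), |t - c| = ((1/2)^2 - c^2)/2 - c*(1/2 - c) := by
      have e : ∫ t in c..(1/2:ℝ), |t - c| = ∫ t in c..(1/2:ℝ), (t - c) := by
        apply intervalIntegral.integral_congr
        intro t ht
        rw [Set.uIcc_of_le hc12.le] at ht
        exact abs_of_nonneg (by linarith [ht.1])
      rw [e, key]
    have I3 : ∫ t in (1/2:ℝ)..(1-c), |t - 1 + c| = ∫ t in (1/2:ℝ)..(1-c), -(t - (1-c)) := by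
      apply intervalIntegral.integral_congr
      intro t ht
      rw [Set.uIcc_of_le (by linarith : (1/2:ℝ) ≤ 1 - c)] at ht
      show |t - 1 + c| = -(t - (1-c))
      rw [show t - 1 + c = t - (1-c) by ring]
      exact abs_of_nonpos (by linarith [ht.2])
    have I4 : ∫ t in (1-c:ℝ)..1, |t - 1 + c| = ∫ t in (1-c:ℝ)..1, (t - (1-c)) := by
      apply intervalIntegral.integral_congr
      intro t ht
      rw [Set.uIcc_of_le (by linarith : (1-c:ℝ) ≤ 1)] at ht
      show |t - 1 + c| = t - (1-c)
      rw [show t - 1 + c = t - (1-c) by ring]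
      exact abs_of_nonneg (by linarith [ht.1])
    have cont1 : ∀ a b : ℝ, IntervalIntegrable (fun t => |t - c|) volume a b :=
      fun a b => (continuous_id.sub continuous_const).abs.intervalIntegrable a b
    have cont2 : ∀ a b : ℝ, IntervalIntegrable (fun t => |t - 1 + c|) volume a b :=
      fun a b => ((continuous_id.sub continuous_const).add continuous_const).abs.intervalIntegrable a b
    rw [← intervalIntegral.integral_add_adjacent_intervals i1 i2, e1, e2,
      ← intervalIntegral.integral_add_adjacent_intervals (cont1 0 c) (cont1 c (1/2)),
      ← intervalIntegral.integral_add_adjacent_intervals (cont2 (1/2) (1-c)) (cont2 (1-c) 1),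
      I1, I2, I3, I4, intervalIntegral.integral_neg, key, key]
    nlinarith [hcsq]
  · -- sup part
    have hmem : (1/2 - c) ∈ (fun t => |p₁ t|) '' Icc (0:ℝ) 1 := by
      refine ⟨1/2, by norm_num, ?_⟩
      show |p₁ (1/2)| = 1/2 - c
      rw [h1 (1/2) ⟨by norm_num, le_refl _⟩, abs_of_nonneg (by nlinarith)]
    have hub : ∀ y ∈ (fun t => |p₁ t|) '' Icc (0:ℝ) 1, y ≤ 1/2 - c := by
      rintro y ⟨t, ht, rfl⟩
      rcases le_or_gt t (1/2) with h | h
      · show |p₁ t| ≤ 1/2 - c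
        rw [h1 t ⟨ht.1, h⟩, abs_le]
        constructor <;> nlinarith [ht.1]
      · show |p₁ t| ≤ 1/2 - c
        rw [h2 t ⟨h, ht.2⟩, abs_le]
        constructor <;> nlinarith [ht.2]
    exact IsGreatest.csSup_eq ⟨hmem, hub⟩
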